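/- For a simplicial group G, the homotopy H : Diag NG × Δ^1 → Diag NG from D_G S_G to id is constant along S_G: for every x ∈ W̄_n G and every k ∈ [0,n+1], H_n(x (S_G)_n, τ^{n+1−k}) = x (S_G)_n. Consequently W̄G is a strong simplicial deformation retract of Diag NG, with strong deformation retraction D_G. -/

import Mathlib

namespace Paper

/-- clamped coface map `δ^k : [a] → [b]`. -/
def δOH (k a b : ℕ) : Fin (a+1) →o Fin (b+1) where
  toFun i := ⟨min (if (i:ℕ) < k then (i:ℕ) else (i:ℕ)+1) b, Nat.lt_succ_of_le (Nat.min_le_right _ _)⟩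
  monotone' := by
    intro i j hij
    have h : (i:ℕ) ≤ (j:ℕ) := hij
    simp only [Fin.mk_le_mk]
    split_ifs <;> omega

/-- clamped codegeneracy map `σ^k : [a] → [b]`. -/
def σOH (k a b : ℕ) : Fin (a+1) →o Fin (b+1) where
  toFun i := ⟨min (if (i:ℕ) ≤ k then (i:ℕ) else (i:ℕ)-1) b, Nat.lt_succ_of_le (Nat.min_le_right _ _)⟩
  monotone' := by
    intro i j hij
    have h : (i:ℕ) ≤ (j:ℕ) := hij
    simp only [Fin.mk_le_mk]
    split_ifs <;> omega

/-- `τ^k : [n] → [1]`, sending `[0, n-k]` to `0` and the rest to `1`. -/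
def τOH (n k : ℕ) : Fin (n+1) →o Fin 2 where
  toFun i := if (i:ℕ) + k ≤ n then 0 else 1
  monotone' := by
    intro i j hij
    have h : (i:ℕ) ≤ (j:ℕ) := hij
    dsimp only
    split_ifs with h1 h2 h3
    · exact le_refl _
    · exact Fin.zero_le _
    · exact absurd h3 (by omega)
    · exact le_refl _

/-- application of `θ : [m] → [n]` to a natural number (clamped). -/
def fApp {m n : ℕ} (θ : Fin (m+1) →o Fin (n+1)) (x : ℕ) : ℕ :=
  (θ ⟨min x m, Nat.lt_succ_of_le (Nat.min_le_right _ _)⟩ : Fin (n+1))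

theorem fApp_mono {m n : ℕ} (θ : Fin (m+1) →o Fin (n+1)) {x y : ℕ} (h : x ≤ y) :
    fApp θ x ≤ fApp θ y :=
  Fin.le_def.mp (θ.monotone (Fin.mk_le_mk.mpr (by omega)))

theorem fApp_le {m n : ℕ} (θ : Fin (m+1) →o Fin (n+1)) (x : ℕ) : fApp θ x ≤ n :=
  Nat.lt_succ_iff.mp (Fin.isLt _)

theorem fApp_coe {m n : ℕ} (θ : Fin (m+1) →o Fin (n+1)) (p : Fin (m+1)) :
    fApp θ (p:ℕ) = (θ p : ℕ) := by
  have hp : (⟨min (p:ℕ) m, Nat.lt_succ_of_le (Nat.min_le_right _ _)⟩ : Fin (m+1)) = p :=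
    Fin.ext (show min (p:ℕ) m = (p:ℕ) from by have := p.isLt; omega)
  unfold fApp
  rw [hp]

/-- `Spl_{≤ p}(θ) : [p] → [pθ]`. -/
def splLe {m n : ℕ} (θ : Fin (m+1) →o Fin (n+1)) (p : Fin (m+1)) :
    Fin ((p:ℕ)+1) →o Fin ((θ p : ℕ)+1) where
  toFun i := ⟨fApp θ (i:ℕ), by
    have h1 : fApp θ (i:ℕ) ≤ fApp θ (p:ℕ) := fApp_mono θ (by have := i.isLt; omega)
    have h2 : fApp θ (p:ℕ) = (θ p : ℕ) := fApp_coe θ p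
    omega⟩
  monotone' := by
    intro a b hab
    have h : (a:ℕ) ≤ (b:ℕ) := hab
    simp only [Fin.mk_le_mk]
    exact fApp_mono θ h

/-- `Spl_{≥ p}(θ) : [m-p] → [n-pθ]`. -/
def splGe {m n : ℕ} (θ : Fin (m+1) →o Fin (n+1)) (p : Fin (m+1)) :
    Fin (m - (p:ℕ) + 1) →o Fin (n - (θ p : ℕ) + 1) where
  toFun i := ⟨fApp θ ((i:ℕ) + (p:ℕ)) - (θ p : ℕ), by
    have h1 : fApp θ ((i:ℕ) + (p:ℕ)) ≤ n := fApp_le θ _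
    omega⟩
  monotone' := by
    intro a b hab
    have h : (a:ℕ) ≤ (b:ℕ) := hab
    simp only [Fin.mk_le_mk]
    have := fApp_mono θ (show (a:ℕ) + (p:ℕ) ≤ (b:ℕ) + (p:ℕ) by omega)
    omega

/-- the restriction `θ|_[i]^[j] : [i] → [j]` of `θ` (clamped). -/
def restrictOH {m n : ℕ} (θ : Fin (m+1) →o Fin (n+1)) (i j : ℕ) : Fin (i+1) →o Fin (j+1) where
  toFun k := ⟨min (fApp θ (k:ℕ)) j, Nat.lt_succ_of_le (Nat.min_le_right _ _)⟩
  monotone' := by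
    intro a b hab
    have h : (a:ℕ) ≤ (b:ℕ) := hab
    simp only [Fin.mk_le_mk]
    have := fApp_mono θ h
    omega

/-- ascending product `f a * f (a+1) * ⋯ * f (b-1)`. -/
def aProd {γ : Type*} [Monoid γ] (f : ℕ → γ) (a : ℕ) : ℕ → γ
  | 0 => 1
  | b+1 => if a ≤ b then aProd f a b * f b else 1

/-- descending product `f (b-1) * f (b-2) * ⋯ * f a`. -/
def dProd {γ : Type*} [Monoid γ] (f : ℕ → γ) (a : ℕ) : ℕ → γ
  | 0 => 1
  | b+1 => if a ≤ b then f b * dProd f a b else 1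

end Paper
namespace Paper

/-- A simplicial group, given by levels, structure maps, functoriality,
and levelwise multiplicativity. -/
structure SGrp where
  obj : ℕ → Type
  grp : ∀ n, Group (obj n)
  map : ∀ {m n : ℕ}, (Fin (m+1) →o Fin (n+1)) → obj n → obj m
  map_id : ∀ {n : ℕ} (x : obj n), map OrderHom.id x = x
  map_comp : ∀ {l m n : ℕ} (α : Fin (l+1) →o Fin (m+1)) (β : Fin (m+1) →o Fin (n+1)) (x : obj n),
    map α (map β x) = map (β.comp α) x
  map_mul : ∀ {m n : ℕ} (θ : Fin (m+1) →o Fin (n+1)) (x y : obj n),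
    map θ (x * y) = map θ x * map θ y

attribute [instance] SGrp.grp

namespace SGrp

/-- face `d_k : G_N → G_{N-1}` -/
def face (G : SGrp) (k : ℕ) {N : ℕ} : G.obj N → G.obj (N-1) := G.map (δOH k (N-1) N)

/-- degeneracy `s_k : G_M → G_{M+1}` -/
def deg (G : SGrp) (k : ℕ) {M : ℕ} : G.obj M → G.obj (M+1) := G.map (σOH k (M+1) M)

/-- transport between levels (junk value `1` when levels differ). -/
def gcast (G : SGrp) {a : ℕ} (b : ℕ) (x : G.obj a) : G.obj b := if h : a = b then h ▸ x else 1

/-- descending composite of faces `d_{i+c} d_{i+c-1} ⋯ d_{i+1}`. -/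
def dcomp (G : SGrp) : (i c : ℕ) → {N : ℕ} → G.obj N → G.obj (N - c)
  | _, 0, _, x => x
  | i, c+1, _, x => G.face (i+1) (G.dcomp (i+1) c x)

/-- ascending composite of degeneracies `s_i s_{i+1} ⋯ s_{i+c-1}`. -/
def scomp (G : SGrp) : (i c : ℕ) → {M : ℕ} → G.obj M → G.obj (M + c)
  | _, 0, _, x => x
  | i, c+1, _, x => G.deg (i+c) (G.scomp i c x)

/-- `x ↦ x d_j ⋯ d_{i+1} s_i ⋯ s_{j-1}`, an endomap of `G_N`. -/
def ds (G : SGrp) (i j : ℕ) {N : ℕ} (x : G.obj N) : G.obj N :=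
  G.gcast N (G.scomp i (min (j - i) N) (G.dcomp i (min (j - i) N) x))

/-- `x ↦ x d_j ⋯ d_{i+1} s_i ⋯ s_{n-1} : G_j → G_n`. -/
def dsTo (G : SGrp) (i n : ℕ) {j : ℕ} (x : G.obj j) : G.obj n :=
  G.gcast n (G.scomp i (n - i) (G.gcast i (G.dcomp i (j - i) x)))

/-- the `y_i` of the section `S_G`, defined by descending recursion (with fuel). -/
def yAux (G : SGrp) (n : ℕ) (g : ∀ j : ℕ, G.obj j) : ℕ → ℕ → G.obj n
  | 0, _ => 1
  | fuel+1, i =>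
      aProd (fun j => G.ds i j (G.yAux n g fuel j)⁻¹) (i+1) n *
      dProd (fun j => G.dsTo i n (g j)) i n

/-- `W̄_n G = ∏_{j = n-1}^{0} G_j`. -/
def WbarN (G : SGrp) (n : ℕ) : Type := ∀ j : Fin n, G.obj (j:ℕ)

/-- extension of a tuple in `W̄_n G` by `1`. -/
def gE (G : SGrp) {n : ℕ} (g : G.WbarN n) : ∀ j : ℕ, G.obj j :=
  fun j => if h : j < n then g ⟨j, h⟩ else 1

/-- the coretraction `(S_G)_n : W̄_n G → Diag_n NG = (G_n)^n`. -/
def SGn (G : SGrp) (n : ℕ) (g : G.WbarN n) : Fin n → G.obj n :=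
  fun i => G.yAux n (G.gE g) n (i:ℕ)

/-- extension of a tuple in `(G_n)^n` by `1`. -/
def xE (G : SGrp) {n : ℕ} (x : Fin n → G.obj n) : ℕ → G.obj n :=
  fun j => if h : j < n then x ⟨j, h⟩ else 1

/-- the structure map `W̄_θ : W̄_n G → W̄_m G` of the Kan classifying simplicial set. -/
def wbarMap (G : SGrp) {m n : ℕ} (θ : Fin (m+1) →o Fin (n+1)) (g : G.WbarN n) : G.WbarN m :=
  fun i => dProd (fun j => G.map (restrictOH θ (i:ℕ) j) (G.gE g j))
    ((θ i.castSucc : Fin (n+1)) : ℕ) ((θ i.succ : Fin (n+1)) : ℕ)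

/-- the structure map `(Diag NG)_θ : (G_n)^n → (G_m)^m` of the diagonal of the nerve. -/
def diagMap (G : SGrp) {m n : ℕ} (θ : Fin (m+1) →o Fin (n+1)) (x : Fin n → G.obj n) :
    Fin m → G.obj m :=
  fun i => dProd (fun j => G.map θ (G.xE x j))
    ((θ i.castSucc : Fin (n+1)) : ℕ) ((θ i.succ : Fin (n+1)) : ℕ)

/-- the retraction `(D_G)_n : Diag_n NG → W̄_n G`, `(g_i)_i ↦ (g_i d_n ⋯ d_{i+1})_i`. -/
def DGn (G : SGrp) (n : ℕ) (x : Fin n → G.obj n) : G.WbarN n :=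
  fun i => G.gcast (i:ℕ) (G.dcomp (i:ℕ) (n - (i:ℕ)) (x i))

/-- the components `y_i^{(n+1-k)}` of the homotopy `H`, by descending recursion (with fuel). -/
def hAux (G : SGrp) (n k : ℕ) (g : ℕ → G.obj n) : ℕ → ℕ → G.obj n
  | 0, _ => 1
  | fuel+1, i =>
      if k ≤ i + 1 then g i
      else
        aProd (fun j => G.ds i j (G.hAux n k g fuel j)⁻¹) (i+1) (k-1) *
        dProd (fun j => G.ds i (k-1) (g j)) i (k-1)

end SGrp

/-- recover `k` from the simplex `τ^{n+1-k} ∈ Δ^1_n`: the number of vertices sent to `0`. -/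
def kOf {n : ℕ} (t : Fin (n+1) →o Fin 2) : ℕ :=
  (Finset.univ.filter (fun i => t i = 0)).card

namespace SGrp

/-- the homotopy `H_n : Diag_n NG × Δ^1_n → Diag_n NG`. -/
def Hn (G : SGrp) (n : ℕ) (x : Fin n → G.obj n) (t : Fin (n+1) →o Fin 2) : Fin n → G.obj n :=
  fun i => G.hAux n (kOf t) (G.xE x) (n+1) (i:ℕ)

end SGrp

/-- morphisms of simplicial groups. -/
structure SGrpHom (G G' : SGrp) where
  app : ∀ n, G.obj n → G'.obj n
  comm : ∀ {m n : ℕ} (θ : Fin (m+1) →o Fin (n+1)) (x : G.obj n),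
    app m (G.map θ x) = G'.map θ (app n x)
  mul : ∀ (n : ℕ) (x y : G.obj n), app n (x * y) = app n x * app n y

end Paper

namespace Paper

/-! ### product lemmas -/

section Prod
variable {γ : Type*} [Monoid γ]

theorem aProd_empty (f : ℕ → γ) {a b : ℕ} (h : b ≤ a) : aProd f a b = 1 := by
  cases b with
  | zero => rfl
  | succ b => exact if_neg (by omega)

theorem dProd_empty (f : ℕ → γ) {a b : ℕ} (h : b ≤ a) : dProd f a b = 1 := by
  cases b with
  | zero => rfl
  | succ b => exact if_neg (by omega)

theorem aProd_succ (f : ℕ → γ) {a b : ℕ} (h : a ≤ b) :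
    aProd f a (b+1) = aProd f a b * f b := if_pos h

theorem dProd_succ (f : ℕ → γ) {a b : ℕ} (h : a ≤ b) :
    dProd f a (b+1) = f b * dProd f a b := if_pos h

theorem aProd_congr {f g : ℕ → γ} {a b : ℕ} (h : ∀ j, a ≤ j → j < b → f j = g j) :
    aProd f a b = aProd g a b := by
  induction b with
  | zero => rfl
  | succ b ih =>
    by_cases hab : a ≤ b
    · rw [aProd_succ f hab, aProd_succ g hab, ih (fun j h1 h2 => h j h1 (by omega)),
        h b hab (by omega)]
    · rw [aProd_empty f (by omega), aProd_empty g (by omega)]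

theorem dProd_congr {f g : ℕ → γ} {a b : ℕ} (h : ∀ j, a ≤ j → j < b → f j = g j) :
    dProd f a b = dProd g a b := by
  induction b with
  | zero => rfl
  | succ b ih =>
    by_cases hab : a ≤ b
    · rw [dProd_succ f hab, dProd_succ g hab, ih (fun j h1 h2 => h j h1 (by omega)),
        h b hab (by omega)]
    · rw [dProd_empty f (by omega), dProd_empty g (by omega)]

theorem dProd_split (f : ℕ → γ) {a c b : ℕ} (h1 : a ≤ c) (h2 : c ≤ b) :
    dProd f a b = dProd f c b * dProd f a c := by
  induction b with
  | zero =>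
    have : c = 0 := by omega
    subst this
    rw [show dProd f 0 0 = 1 from rfl, show dProd f a 0 = 1 from rfl, one_mul]
  | succ b ih =>
    by_cases hcb : c ≤ b
    · rw [dProd_succ f (by omega), dProd_succ f hcb, ih hcb, mul_assoc]
    · have : c = b + 1 := by omega
      subst this
      rw [dProd_empty f (le_refl _), one_mul]

theorem aProd_split (f : ℕ → γ) {a c b : ℕ} (h1 : a ≤ c) (h2 : c ≤ b) :
    aProd f a b = aProd f a c * aProd f c b := by
  induction b with
  | zero =>
    have : c = 0 := by omega
    subst this
    rw [show aProd f 0 0 = 1 from rfl, show aProd f a 0 = 1 from rfl, mul_one]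
  | succ b ih =>
    by_cases hcb : c ≤ b
    · rw [aProd_succ f (by omega), aProd_succ f hcb, ih hcb, mul_assoc]
    · have : c = b + 1 := by omega
      subst this
      rw [aProd_empty f (le_refl _), mul_one]

theorem dProd_bot (f : ℕ → γ) {a b : ℕ} (h : a < b) :
    dProd f a b = dProd f (a+1) b * f a := by
  rw [dProd_split f (show a ≤ a+1 by omega) h]
  congr 1
  rw [dProd_succ f (le_refl a), dProd_empty f (le_refl a), mul_one]

theorem aProd_bot (f : ℕ → γ) {a b : ℕ} (h : a < b) :
    aProd f a b = f a * aProd f (a+1) b := by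
  rw [aProd_split f (show a ≤ a+1 by omega) h]
  congr 1
  rw [aProd_succ f (le_refl a), aProd_empty f (le_refl a), one_mul]

end Prod

theorem aProd_inv {γ : Type*} [Group γ] (f : ℕ → γ) (a b : ℕ) :
    aProd (fun j => (f j)⁻¹) a b = (dProd f a b)⁻¹ := by
  induction b with
  | zero => simp [aProd, dProd]
  | succ b ih =>
    by_cases hab : a ≤ b
    · rw [aProd_succ _ hab, dProd_succ f hab, ih, mul_inv_rev]
    · rw [aProd_empty _ (by omega), dProd_empty f (by omega), inv_one]

theorem hom_dProd {γ δ : Type*} [Monoid γ] [Monoid δ] (φ : γ →* δ) (f : ℕ → γ) (a b : ℕ) :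
    φ (dProd f a b) = dProd (fun j => φ (f j)) a b := by
  induction b with
  | zero => simp [dProd]
  | succ b ih =>
    by_cases hab : a ≤ b
    · rw [dProd_succ f hab, map_mul, ih, dProd_succ _ hab]
    · rw [dProd_empty f (by omega), dProd_empty _ (a := a) (by omega), map_one]

theorem hom_aProd {γ δ : Type*} [Monoid γ] [Monoid δ] (φ : γ →* δ) (f : ℕ → γ) (a b : ℕ) :
    φ (aProd f a b) = aProd (fun j => φ (f j)) a b := by
  induction b with
  | zero => simp [aProd]
  | succ b ih =>
    by_cases hab : a ≤ b
    · rw [aProd_succ f hab, map_mul, ih, aProd_succ _ hab]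
    · rw [aProd_empty f (by omega), aProd_empty _ (a := a) (by omega), map_one]

end Paper

namespace Paper

/-! ### explicit order homs -/

/-- collapse `[i,j]` to `i` (clamped at `N`). -/
def ηOH (i j N : ℕ) : Fin (N+1) →o Fin (N+1) where
  toFun p := ⟨min (if (p:ℕ) ≤ i then (p:ℕ) else if (p:ℕ) ≤ j then i else (p:ℕ)) N,
    Nat.lt_succ_of_le (Nat.min_le_right _ _)⟩
  monotone' := by
    intro a b hab
    have h : (a:ℕ) ≤ (b:ℕ) := hab
    simp only [Fin.mk_le_mk]
    split_ifs <;> omega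

/-- `x ↦ min (min x i) j : [n] → [j]`. -/
def ζOH (i n j : ℕ) : Fin (n+1) →o Fin (j+1) where
  toFun p := ⟨min (min (p:ℕ) i) j, Nat.lt_succ_of_le (Nat.min_le_right _ _)⟩
  monotone' := by
    intro a b hab
    have h : (a:ℕ) ≤ (b:ℕ) := hab
    simp only [Fin.mk_le_mk]
    omega

/-- `x ↦ min x b : [a] → [b]`. -/
def ιOH (a b : ℕ) : Fin (a+1) →o Fin (b+1) where
  toFun p := ⟨min (p:ℕ) b, Nat.lt_succ_of_le (Nat.min_le_right _ _)⟩
  monotone' := by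
    intro a b hab
    have h : (a:ℕ) ≤ (b:ℕ) := hab
    simp only [Fin.mk_le_mk]
    omega

/-- chain of cofaces `δ^{i+c} ⋯ δ^{i+1} : [N-c] → [N]`. -/
def δchain (i c N : ℕ) : Fin (N-c+1) →o Fin (N+1) where
  toFun p := ⟨min (if (p:ℕ) ≤ i then (p:ℕ) else (p:ℕ) + c) N,
    Nat.lt_succ_of_le (Nat.min_le_right _ _)⟩
  monotone' := by
    intro a b hab
    have h : (a:ℕ) ≤ (b:ℕ) := hab
    simp only [Fin.mk_le_mk]
    split_ifs <;> omega

/-- chain of codegeneracies `σ^i ⋯ σ^{i+c-1} : [M+c] → [M]`. -/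
def σchain (i c M : ℕ) : Fin (M+c+1) →o Fin (M+1) where
  toFun p := ⟨min (if (p:ℕ) ≤ i then (p:ℕ) else if (p:ℕ) ≤ i+c then i else (p:ℕ) - c) M,
    Nat.lt_succ_of_le (Nat.min_le_right _ _)⟩
  monotone' := by
    intro a b hab
    have h : (a:ℕ) ≤ (b:ℕ) := hab
    simp only [Fin.mk_le_mk]
    split_ifs <;> omega

theorem oh_ext {m n : ℕ} {θ ψ : Fin (m+1) →o Fin (n+1)}
    (h : ∀ p : Fin (m+1), (θ p : ℕ) = (ψ p : ℕ)) : θ = ψ := by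
  apply OrderHom.ext
  funext p
  exact Fin.ext (h p)

namespace SGrp

variable (G : SGrp)

/-- structure maps as monoid homs. -/
def mapHom {m n : ℕ} (θ : Fin (m+1) →o Fin (n+1)) : G.obj n →* G.obj m :=
  MonoidHom.mk' (G.map θ) (G.map_mul θ)

theorem map_one {m n : ℕ} (θ : Fin (m+1) →o Fin (n+1)) : G.map θ (1 : G.obj n) = 1 :=
  (G.mapHom θ).map_one

theorem map_inv {m n : ℕ} (θ : Fin (m+1) →o Fin (n+1)) (x : G.obj n) :
    G.map θ x⁻¹ = (G.map θ x)⁻¹ :=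
  (G.mapHom θ).map_inv x

theorem map_ext {m n : ℕ} {θ ψ : Fin (m+1) →o Fin (n+1)}
    (h : ∀ p : Fin (m+1), (θ p : ℕ) = (ψ p : ℕ)) (x : G.obj n) : G.map θ x = G.map ψ x := by
  rw [oh_ext h]

theorem map_id_ext {n : ℕ} {θ : Fin (n+1) →o Fin (n+1)}
    (h : ∀ p : Fin (n+1), (θ p : ℕ) = (p : ℕ)) (x : G.obj n) : G.map θ x = x := by
  rw [show θ = OrderHom.id from oh_ext h, G.map_id]

theorem map2_ext {a b c : ℕ} (α : Fin (a+1) →o Fin (b+1)) (β : Fin (b+1) →o Fin (c+1))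
    {γ : Fin (a+1) →o Fin (c+1)} (h : ∀ p : Fin (a+1), (β (α p) : ℕ) = (γ p : ℕ))
    (z : G.obj c) : G.map α (G.map β z) = G.map γ z := by
  rw [G.map_comp α β z]
  exact G.map_ext h z

theorem map_dProd {m n : ℕ} (θ : Fin (m+1) →o Fin (n+1)) (f : ℕ → G.obj n) (a b : ℕ) :
    G.map θ (dProd f a b) = dProd (fun j => G.map θ (f j)) a b :=
  hom_dProd (G.mapHom θ) f a b

theorem map_aProd {m n : ℕ} (θ : Fin (m+1) →o Fin (n+1)) (f : ℕ → G.obj n) (a b : ℕ) :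
    G.map θ (aProd f a b) = aProd (fun j => G.map θ (f j)) a b :=
  hom_aProd (G.mapHom θ) f a b

/-! ### map forms of the composite operators -/

theorem gcast_map {a b : ℕ} (h : a = b) (x : G.obj a) :
    G.gcast b x = G.map (ιOH b a) x := by
  subst h
  rw [gcast, dif_pos rfl]
  exact (G.map_id_ext (fun p => by simp [ιOH, DFunLike.coe, Nat.lt_succ_iff.mp p.isLt]) x).symm

theorem dcomp_eq {i c N : ℕ} (hc : c ≤ N) (x : G.obj N) :
    G.dcomp i c x = G.map (δchain i c N) x := by
  induction c generalizing i with
  | zero =>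
    exact (G.map_id_ext (fun p => by
      simp only [δchain, OrderHom.coe_mk, DFunLike.coe]
      have := p.isLt
      split_ifs <;> omega) x).symm
  | succ c ih =>
    show G.face (i+1) (G.dcomp (i+1) c x) = _
    rw [ih (by omega), face]
    exact G.map2_ext _ _ (fun p => by
      have hp := p.isLt
      simp only [δOH, δchain, OrderHom.coe_mk, DFunLike.coe]
      split_ifs <;> omega) x

theorem scomp_eq {i c M : ℕ} (x : G.obj M) :
    G.scomp i c x = G.map (σchain i c M) x := by
  induction c with
  | zero =>
    exact (G.map_id_ext (fun p => by
      simp only [σchain, OrderHom.coe_mk, DFunLike.coe]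
      have := p.isLt
      split_ifs <;> omega) x).symm
  | succ c ih =>
    show G.deg (i+c) (G.scomp i c x) = _
    rw [ih, deg]
    exact G.map2_ext _ _ (fun p => by
      have hp := p.isLt
      simp only [σOH, σchain, OrderHom.coe_mk, DFunLike.coe]
      split_ifs <;> omega) x

theorem ds_eq {i j N : ℕ} (hij : i ≤ j) (hj : j ≤ N) (x : G.obj N) :
    G.ds i j x = G.map (ηOH i j N) x := by
  rw [ds]
  have hc : min (j - i) N = j - i := by omega
  rw [G.dcomp_eq (by omega), G.scomp_eq, G.gcast_map (by omega)]
  rw [G.map_comp, G.map_comp]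
  refine G.map_ext (fun p => ?_) x
  have hp := p.isLt
  simp only [OrderHom.comp_coe, Function.comp_apply]; simp only [ιOH, σchain, δchain, ηOH, OrderHom.coe_mk, DFunLike.coe]
  split_ifs <;> omega

end SGrp
end Paper

namespace Paper
namespace SGrp

variable (G : SGrp)

theorem ds_low {i j N : ℕ} (hji : j ≤ i) (x : G.obj N) : G.ds i j x = x := by
  rw [ds]
  have hc : min (j - i) N = 0 := by omega
  rw [hc]
  show G.gcast N (G.scomp i 0 (G.dcomp i 0 x)) = x
  rw [show G.scomp i 0 (G.dcomp i 0 x) = x from rfl]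
  simp [gcast]

theorem dsTo_eq {i j n : ℕ} (hij : i ≤ j) (hin : i ≤ n) (x : G.obj j) :
    G.dsTo i n x = G.map (ζOH i n j) x := by
  rw [dsTo, G.dcomp_eq (by omega), G.gcast_map (by omega), G.scomp_eq,
    G.gcast_map (by omega), G.map_comp, G.map_comp, G.map_comp]
  refine G.map_ext (fun p => ?_) x
  have hp := p.isLt
  simp only [OrderHom.comp_coe, Function.comp_apply]; simp only [ιOH, σchain, δchain, ζOH, OrderHom.coe_mk, DFunLike.coe]
  split_ifs <;> omega

theorem dchain_eq {i n : ℕ} (hin : i ≤ n) (z : G.obj n) :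
    G.gcast i (G.dcomp i (n - i) z) = G.map (ιOH i n) z := by
  rw [G.dcomp_eq (by omega), G.gcast_map (by omega), G.map_comp]
  refine G.map_ext (fun p => ?_) z
  have hp := p.isLt
  simp only [OrderHom.comp_coe, Function.comp_apply]; simp only [ιOH, δchain, OrderHom.coe_mk, DFunLike.coe]
  split_ifs <;> omega

/-- the collapse operator `x d_j ⋯ d_{i+1} s_i ⋯ s_{j-1}` in map form. -/
def cop (n i j : ℕ) (z : G.obj n) : G.obj n := G.map (ηOH i j n) z

theorem cop_id {n i j : ℕ} (hji : j ≤ i) (z : G.obj n) : G.cop n i j z = z :=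
  G.map_id_ext (fun p => by
    have := p.isLt
    simp only [ηOH, OrderHom.coe_mk, DFunLike.coe]
    split_ifs <;> omega) z

theorem cop_cop {n i j m : ℕ} (hij : i ≤ j) (hjn : j ≤ n) (_hmn : m ≤ n) (z : G.obj n) :
    G.cop n i m (G.cop n i j z) = G.cop n i (max j m) z :=
  G.map2_ext _ _ (fun p => by
    have := p.isLt
    simp only [ηOH, OrderHom.coe_mk, DFunLike.coe]
    split_ifs <;> omega) z

theorem cop_mul {n i j : ℕ} (z w : G.obj n) :
    G.cop n i j (z * w) = G.cop n i j z * G.cop n i j w := G.map_mul _ z w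

theorem cop_dProd {n i j : ℕ} (f : ℕ → G.obj n) (a b : ℕ) :
    G.cop n i j (dProd f a b) = dProd (fun l => G.cop n i j (f l)) a b := G.map_dProd _ f a b

end SGrp
end Paper

namespace Paper
namespace SGrp

variable (G : SGrp)

/-! ### stable values of the recursions -/

/-- stable value of `hAux`. -/
def hVal (n k : ℕ) (g : ℕ → G.obj n) (i : ℕ) : G.obj n := G.hAux n k g (n+1) i

/-- stable value of `yAux`. -/
def yVal (n : ℕ) (g : ∀ j : ℕ, G.obj j) (i : ℕ) : G.obj n := G.yAux n g (n+1) i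

theorem hAux_succ_def (n k : ℕ) (g : ℕ → G.obj n) (fuel i : ℕ) :
    G.hAux n k g (fuel+1) i = if k ≤ i + 1 then g i else
      aProd (fun j => G.ds i j (G.hAux n k g fuel j)⁻¹) (i+1) (k-1) *
      dProd (fun j => G.ds i (k-1) (g j)) i (k-1) := rfl

theorem yAux_succ_def (n : ℕ) (g : ∀ j : ℕ, G.obj j) (fuel i : ℕ) :
    G.yAux n g (fuel+1) i =
      aProd (fun j => G.ds i j (G.yAux n g fuel j)⁻¹) (i+1) n *
      dProd (fun j => G.dsTo i n (g j)) i n := rfl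

theorem hAux_congr {n k : ℕ} {g g' : ℕ → G.obj n} (h : ∀ j, g j = g' j) (fuel i : ℕ) :
    G.hAux n k g fuel i = G.hAux n k g' fuel i := by
  induction fuel generalizing i with
  | zero => rfl
  | succ fuel ih =>
    rw [hAux_succ_def, hAux_succ_def]
    by_cases hki : k ≤ i + 1
    · rw [if_pos hki, if_pos hki, h i]
    · rw [if_neg hki, if_neg hki,
        aProd_congr (fun j _ _ => by rw [ih j]),
        dProd_congr (fun j _ _ => by rw [h j])]

theorem hAux_stab {n k : ℕ} (hk : k ≤ n + 1) (g : ℕ → G.obj n) :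
    ∀ fuel i, n ≤ i + fuel + 1 → G.hAux n k g (fuel+2) i = G.hAux n k g (fuel+1) i := by
  intro fuel
  induction fuel with
  | zero =>
    intro i hi
    rw [hAux_succ_def, hAux_succ_def]
    by_cases hki : k ≤ i + 1
    · rw [if_pos hki, if_pos hki]
    · rw [if_neg hki, if_neg hki, aProd_empty _ (by omega), aProd_empty _ (by omega)]
  | succ fuel ih =>
    intro i hi
    rw [hAux_succ_def, hAux_succ_def]
    by_cases hki : k ≤ i + 1
    · rw [if_pos hki, if_pos hki]
    · rw [if_neg hki, if_neg hki,
        aProd_congr (fun j hj _ => by rw [ih j (by omega)])]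

theorem hAux_fuel {n k : ℕ} (hk : k ≤ n + 1) (g : ℕ → G.obj n) :
    ∀ d fuel i, n ≤ i + fuel + 1 → G.hAux n k g (fuel+1+d) i = G.hAux n k g (fuel+1) i := by
  intro d
  induction d with
  | zero => intro fuel i _; rfl
  | succ d ih =>
    intro fuel i hi
    have h1 : fuel + 1 + (d + 1) = (fuel + d) + 2 := by omega
    have h2 := G.hAux_stab hk g (fuel + d) i (by omega)
    rw [h1, h2, show fuel + d + 1 = fuel + 1 + d from by omega, ih fuel i hi]

theorem yAux_stab {n : ℕ} (g : ∀ j : ℕ, G.obj j) :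
    ∀ fuel i, n ≤ i + fuel + 1 → G.yAux n g (fuel+2) i = G.yAux n g (fuel+1) i := by
  intro fuel
  induction fuel with
  | zero =>
    intro i hi
    rw [yAux_succ_def, yAux_succ_def, aProd_empty _ (by omega), aProd_empty _ (by omega)]
  | succ fuel ih =>
    intro i hi
    rw [yAux_succ_def, yAux_succ_def,
      aProd_congr (fun j hj _ => by rw [ih j (by omega)])]

/-- `SGn` is given by the stable value `yVal`. -/
theorem SGn_eq_yVal {n : ℕ} (x : G.WbarN n) (i : Fin n) :
    G.SGn n x i = G.yVal n (G.gE x) (i : ℕ) := by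
  have hn : 0 < n := i.pos
  obtain ⟨n', rfl⟩ : ∃ n', n = n' + 1 := ⟨n - 1, by omega⟩
  exact (G.yAux_stab (G.gE x) n' (i:ℕ) (by omega)).symm

theorem hVal_low {n k : ℕ} (g : ℕ → G.obj n) {i : ℕ} (hki : k ≤ i + 1) :
    G.hVal n k g i = g i := by
  rw [hVal, hAux_succ_def, if_pos hki]

theorem hVal_rec {n k : ℕ} (hk : k ≤ n + 1) (g : ℕ → G.obj n) {i : ℕ} (hik : i + 1 < k) :
    G.hVal n k g i =
      aProd (fun j => (G.cop n i j (G.hVal n k g j))⁻¹) (i+1) (k-1) *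
      G.cop n i (k-1) (dProd g i (k-1)) := by
  have h1 : G.hVal n k g i = G.hAux n k g (n+2) i :=
    (G.hAux_stab hk g n i (by omega)).symm
  rw [h1, hAux_succ_def, if_neg (by omega)]
  congr 1
  · refine aProd_congr (fun j hj hjk => ?_)
    rw [G.ds_eq (by omega) (by omega), G.map_inv]
    rfl
  · rw [G.cop_dProd]
    refine dProd_congr (fun j hj hjk => ?_)
    rw [G.ds_eq (by omega) (by omega)]
    rfl

theorem yVal_rec {n : ℕ} (g : ∀ j : ℕ, G.obj j) {i : ℕ} (hi : i < n) :
    G.yVal n g i =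
      aProd (fun j => (G.cop n i j (G.yVal n g j))⁻¹) (i+1) n *
      dProd (fun j => G.map (ζOH i n j) (g j)) i n := by
  have h1 : G.yVal n g i = G.yAux n g (n+2) i :=
    (G.yAux_stab g n i (by omega)).symm
  rw [h1, yAux_succ_def]
  congr 1
  · refine aProd_congr (fun j hj hjk => ?_)
    rw [G.ds_eq (by omega) (by omega), G.map_inv]
    rfl
  · refine dProd_congr (fun j hj hjk => ?_)
    rw [G.dsTo_eq (by omega) (by omega)]

end SGrp
end Paper

namespace Paper
namespace SGrp

variable (G : SGrp)

theorem cop_aProd {n i j : ℕ} (f : ℕ → G.obj n) (a b : ℕ) :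
    G.cop n i j (aProd f a b) = aProd (fun l => G.cop n i j (f l)) a b := G.map_aProd _ f a b

theorem cop_inv {n i j : ℕ} (z : G.obj n) : G.cop n i j z⁻¹ = (G.cop n i j z)⁻¹ := G.map_inv _ z

/-- the key product-collapse lemma. -/
theorem ddl {n T : ℕ} (hT : T ≤ n) (V B : ℕ → G.obj n) {i m : ℕ}
    (hrec : V i = aProd (fun j => (G.cop n i j (V j))⁻¹) (i+1) T * B i)
    (hB : G.cop n i m (B i) = B i)
    (him : i < m) (hmT : m ≤ T) :
    G.cop n i m (dProd V i m) = dProd (fun j => G.cop n i j (V j)) i m := by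
  set R := aProd (fun j => (G.cop n i j (V j))⁻¹) m T * B i with hR
  have h1 : G.cop n i m (V i) = (dProd (fun j => G.cop n i m (V j)) (i+1) m)⁻¹ * R := by
    rw [hrec, G.cop_mul, hB, G.cop_aProd]
    rw [aProd_congr (g := fun j => (G.cop n i (max j m) (V j))⁻¹)
      (fun j hj hjT => by rw [G.cop_inv, G.cop_cop (by omega) (by omega) (by omega)])]
    rw [aProd_split _ (show i+1 ≤ m by omega) hmT, mul_assoc, hR]
    congr 2
    · rw [← aProd_inv]
      exact aProd_congr (fun j hj hjm => by rw [max_eq_right (by omega)])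
    · exact aProd_congr (fun j hj hjT => by rw [max_eq_left (by omega)])
  have h2 : V i = (dProd (fun j => G.cop n i j (V j)) (i+1) m)⁻¹ * R := by
    rw [hrec, aProd_split _ (show i+1 ≤ m by omega) hmT, mul_assoc, hR, ← aProd_inv]
  calc G.cop n i m (dProd V i m)
      = G.cop n i m (dProd V (i+1) m) * G.cop n i m (V i) := by
        rw [dProd_bot V him, G.cop_mul]
    _ = dProd (fun j => G.cop n i m (V j)) (i+1) m * G.cop n i m (V i) := by
        rw [G.cop_dProd]
    _ = dProd (fun j => G.cop n i j (V j)) (i+1) m * V i := by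
        rw [h1, h2, mul_inv_cancel_left, mul_inv_cancel_left]
    _ = dProd (fun j => G.cop n i j (V j)) (i+1) m * G.cop n i i (V i) := by
        rw [G.cop_id (le_refl i)]
    _ = dProd (fun j => G.cop n i j (V j)) i m := (dProd_bot _ him).symm

/-- collapsing a `cop` under a map avoiding the interval. -/
theorem map_cop_avoid {m' n k c : ℕ} (ψ : Fin (m'+1) →o Fin (n+1))
    (hav : ∀ q : Fin (m'+1), (ψ q : ℕ) ≤ c ∨ k ≤ (ψ q : ℕ)) {j l : ℕ}
    (hcj : c ≤ j) (hlk : l < k) (z : G.obj n) :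
    G.map ψ (G.cop n j l z) = G.map ψ z := by
  rw [cop, G.map_comp]
  refine G.map_ext (fun p => ?_) z
  have hp := (ψ p).isLt
  rcases hav p with h | h <;>
  · simp only [OrderHom.comp_coe, Function.comp_apply]; simp only [ηOH, OrderHom.coe_mk, DFunLike.coe] at hp h ⊢
    split_ifs <;> omega

/-- main collapsing lemma: products of homotopy components below the cut. -/
theorem ML {n k : ℕ} (hk : k ≤ n + 1) (g : ℕ → G.obj n) {m' c : ℕ}
    (ψ : Fin (m'+1) →o Fin (n+1))
    (hav : ∀ q : Fin (m'+1), (ψ q : ℕ) ≤ c ∨ k ≤ (ψ q : ℕ)) {j : ℕ}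
    (hcj : c ≤ j) (hjk : j ≤ k - 1) :
    dProd (fun l => G.map ψ (G.hVal n k g l)) j (k-1) = G.map ψ (dProd g j (k-1)) := by
  rcases Nat.eq_or_lt_of_le hjk with h | h
  · subst h
    rw [dProd_empty (fun l => G.map ψ (G.hVal n k g l)) (le_refl _),
      dProd_empty g (le_refl _), G.map_one]
  · have hfj : G.map ψ (G.hVal n k g j) =
        (dProd (fun l => G.map ψ (G.hVal n k g l)) (j+1) (k-1))⁻¹ *
        G.map ψ (dProd g j (k-1)) := by
      rw [G.hVal_rec hk g (by omega), G.map_mul, G.map_cop_avoid ψ hav hcj (by omega),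
        G.map_aProd, ← aProd_inv]
      congr 1
      refine aProd_congr (fun l hl hlk => ?_)
      rw [G.map_inv, G.map_cop_avoid ψ hav hcj (by omega)]
    rw [dProd_bot _ h, hfj, mul_inv_cancel_left]

end SGrp
end Paper

namespace Paper

theorem kOf_le {n : ℕ} (t : Fin (n+1) →o Fin 2) : kOf t ≤ n + 1 :=
  le_trans (Finset.card_filter_le _ _) (by simp)

theorem kOf_lt_iff {n : ℕ} (t : Fin (n+1) →o Fin 2) (q : Fin (n+1)) :
    (q : ℕ) < kOf t ↔ t q = 0 := by
  constructor
  · intro h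
    by_contra hq
    have hsub : Finset.univ.filter (fun i => t i = 0) ⊆ Finset.Iio q := by
      intro a ha
      rw [Finset.mem_filter] at ha
      rw [Finset.mem_Iio]
      by_contra hle
      have hqa : q ≤ a := not_lt.mp hle
      have := t.monotone hqa
      rw [ha.2] at this
      exact hq (Fin.le_zero_iff.mp this)
    have hc := Finset.card_le_card hsub
    rw [Fin.card_Iio] at hc
    exact absurd (lt_of_lt_of_le h hc) (lt_irrefl _)
  · intro h0
    have hsub : Finset.Iic q ⊆ Finset.univ.filter (fun i => t i = 0) := by
      intro a ha
      rw [Finset.mem_Iic] at ha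
      rw [Finset.mem_filter]
      refine ⟨Finset.mem_univ a, ?_⟩
      have := t.monotone ha
      rw [h0] at this
      exact Fin.le_zero_iff.mp this
    have hc := Finset.card_le_card hsub
    rw [Fin.card_Iic] at hc
    rw [kOf]
    omega

theorem kOf_tau_zero (n : ℕ) : kOf (τOH n 0) = n + 1 := by
  rw [kOf, Finset.filter_true_of_mem (fun i _ => by
    simp only [τOH, OrderHom.coe_mk, DFunLike.coe]
    rw [if_pos (by have := i.isLt; omega)]), Finset.card_univ, Fintype.card_fin]

theorem kOf_tau_top (n : ℕ) : kOf (τOH n (n+1)) = 0 := by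
  rw [kOf, Finset.filter_false_of_mem (fun i _ => by
    simp only [τOH, OrderHom.coe_mk, DFunLike.coe]
    rw [if_neg (by omega)]
    exact one_ne_zero), Finset.card_empty]

namespace SGrp

variable (G : SGrp)

/-- Conjunct 6: `H(x, τ^0) = x`. -/
theorem Hn_top {n : ℕ} (x : Fin n → G.obj n) : G.Hn n x (τOH n (n+1)) = x := by
  funext i
  show G.hAux n (kOf (τOH n (n+1))) (G.xE x) (n+1) (i : ℕ) = x i
  rw [kOf_tau_top, hAux_succ_def, if_pos (by omega), xE, dif_pos i.isLt]

/-- Conjunct 2 key: `d`-chains of the section components recover the data. -/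
theorem dchain_yVal {n : ℕ} (x : G.WbarN n) :
    ∀ d i, i < n → n - 1 - i ≤ d →
      G.map (ιOH i n) (G.yVal n (G.gE x) i) = G.gE x i := by
  intro d
  induction d with
  | zero =>
    intro i hi hd
    rw [G.yVal_rec _ hi, G.map_mul, aProd_empty _ (by omega), G.map_one, one_mul,
      G.map_dProd, dProd_bot _ hi, dProd_empty _ (by omega), one_mul,
      G.map2_ext (ιOH i n) (ζOH i n i) (γ := ιOH i i) (fun p => by
        have := p.isLt
        simp only [ιOH, ζOH, OrderHom.coe_mk, DFunLike.coe]
        omega),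
      G.map_id_ext (fun p => by
        have := p.isLt
        simp only [ιOH, OrderHom.coe_mk, DFunLike.coe]
        omega)]
  | succ d ih =>
    intro i hi hd
    rw [G.yVal_rec _ hi, G.map_mul, G.map_aProd, G.map_dProd]
    have hA : ∀ j, i + 1 ≤ j → j < n →
        G.map (ιOH i n) ((G.cop n i j (G.yVal n (G.gE x) j))⁻¹) =
        (G.map (ιOH i j) (G.gE x j))⁻¹ := by
      intro j hj hjn
      rw [G.map_inv]
      congr 1
      rw [cop, G.map2_ext (ιOH i n) (ηOH i j n) (γ := ιOH i n) (fun p => by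
          have := p.isLt
          simp only [ιOH, ηOH, OrderHom.coe_mk, DFunLike.coe]
          split_ifs <;> omega),
        ← ih j hjn (by omega),
        G.map2_ext (ιOH i j) (ιOH j n) (γ := ιOH i n) (fun p => by
          have := p.isLt
          simp only [ιOH, OrderHom.coe_mk, DFunLike.coe]
          omega)]
    have hD : ∀ j, i ≤ j → j < n →
        G.map (ιOH i n) (G.map (ζOH i n j) (G.gE x j)) = G.map (ιOH i j) (G.gE x j) := by
      intro j hj hjn
      exact G.map2_ext (ιOH i n) (ζOH i n j) (γ := ιOH i j) (fun p => by
        have := p.isLt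
        simp only [ιOH, ζOH, OrderHom.coe_mk, DFunLike.coe]
        omega) _
    rw [aProd_congr (fun j hj hjn => hA j hj hjn), dProd_congr (fun j hj hjn => hD j hj hjn),
      aProd_inv, dProd_bot _ hi, ← mul_assoc, inv_mul_cancel, one_mul,
      G.map_id_ext (fun p => by
        have := p.isLt
        simp only [ιOH, OrderHom.coe_mk, DFunLike.coe]
        omega)]

/-- Conjunct 2: `D_G ∘ S_G = id`. -/
theorem DGn_SGn {n : ℕ} (x : G.WbarN n) : G.DGn n (G.SGn n x) = x := by
  funext i
  show G.gcast (i:ℕ) (G.dcomp (i:ℕ) (n - (i:ℕ)) (G.SGn n x i)) = x i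
  rw [G.SGn_eq_yVal, G.dchain_eq (by omega),
    G.dchain_yVal x (n - 1 - (i:ℕ)) (i:ℕ) i.isLt (le_refl _), gE, dif_pos i.isLt]

end SGrp
end Paper

namespace Paper
namespace SGrp

variable (G : SGrp)

/-- Conjunct 5 key. -/
theorem hVal_top_eq_yVal {n : ℕ} (x : Fin n → G.obj n) :
    ∀ d i, i < n → n - 1 - i ≤ d →
      G.hVal n (n+1) (G.xE x) i = G.yVal n (G.gE (G.DGn n x)) i := by
  intro d
  induction d with
  | zero =>
    intro i hi hd
    rw [G.hVal_rec (le_refl _) _ (by omega), G.yVal_rec _ hi]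
    rw [show n + 1 - 1 = n from rfl]
    rw [aProd_empty _ (by omega), aProd_empty _ (by omega)]
    congr 1
    rw [G.cop_dProd]
    refine dProd_congr (fun j hj hjn => ?_)
    rw [gE, dif_pos hjn]
    show G.cop n i n (G.xE x j) = G.map (ζOH i n j) (G.gcast j (G.dcomp j (n - j) (x ⟨j, hjn⟩)))
    rw [G.dchain_eq (by omega), xE, dif_pos hjn, cop,
      G.map2_ext (ζOH i n j) (ιOH j n) (γ := ηOH i n n) (fun p => by
        have := p.isLt
        simp only [ζOH, ιOH, ηOH, OrderHom.coe_mk, DFunLike.coe]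
        split_ifs <;> omega)]
  | succ d ih =>
    intro i hi hd
    rw [G.hVal_rec (le_refl _) _ (by omega), G.yVal_rec _ hi]
    rw [show n + 1 - 1 = n from rfl]
    congr 1
    · refine aProd_congr (fun j hj hjn => ?_)
      rw [ih j (by omega) (by omega)]
    · rw [G.cop_dProd]
      refine dProd_congr (fun j hj hjn => ?_)
      rw [gE, dif_pos hjn]
      show G.cop n i n (G.xE x j) =
        G.map (ζOH i n j) (G.gcast j (G.dcomp j (n - j) (x ⟨j, hjn⟩)))
      rw [G.dchain_eq (by omega), xE, dif_pos hjn, cop,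
        G.map2_ext (ζOH i n j) (ιOH j n) (γ := ηOH i n n) (fun p => by
          have := p.isLt
          simp only [ζOH, ιOH, ηOH, OrderHom.coe_mk, DFunLike.coe]
          split_ifs <;> omega)]

/-- Conjunct 5: `H(x, τ^{n+1}) = S_G D_G x`. -/
theorem Hn_bot {n : ℕ} (x : Fin n → G.obj n) :
    G.Hn n x (τOH n 0) = G.SGn n (G.DGn n x) := by
  funext i
  show G.hAux n (kOf (τOH n 0)) (G.xE x) (n+1) (i:ℕ) = G.SGn n (G.DGn n x) i
  rw [kOf_tau_zero, G.SGn_eq_yVal]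
  exact G.hVal_top_eq_yVal x (n - 1 - (i:ℕ)) (i:ℕ) i.isLt (le_refl _)

/-- Conjunct 1 key: constancy of the homotopy along the section. -/
theorem hVal_const {n k : ℕ} (hk : k ≤ n + 1) (x : G.WbarN n)
    (y' : ℕ → G.obj n) (hy' : ∀ j, y' j = if h : j < n then G.yVal n (G.gE x) j else 1) :
    ∀ d i, k - 1 - i ≤ d → G.hVal n k y' i = y' i := by
  intro d
  induction d with
  | zero =>
    intro i hd
    exact G.hVal_low y' (by omega)
  | succ d ih =>
    intro i hd
    by_cases hki : k ≤ i + 1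
    · exact G.hVal_low y' hki
    · have hik : i + 1 < k := by omega
      have hin : i < n := by omega
      rw [G.hVal_rec hk y' hik]
      have hy2 : ∀ j, i ≤ j → j < k - 1 → y' j = G.yVal n (G.gE x) j := by
        intro j hj hjk
        rw [hy' j, dif_pos (by omega)]
      rw [aProd_congr (g := fun j => (G.cop n i j (G.yVal n (G.gE x) j))⁻¹)
          (fun j hj hjk => by rw [ih j (by omega), hy2 j (by omega) hjk]),
        dProd_congr (fun j hj hjk => hy2 j hj hjk),
        G.ddl (le_refl n) (fun j => G.yVal n (G.gE x) j)
          (fun i => dProd (fun j => G.map (ζOH i n j) (G.gE x j)) i n)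
          (G.yVal_rec _ hin)
          (by
            rw [G.cop_dProd]
            refine dProd_congr (fun j hj hjn => ?_)
            rw [cop, G.map2_ext (ηOH i (k-1) n) (ζOH i n j) (γ := ζOH i n j) (fun p => by
              have := p.isLt
              simp only [ζOH, ηOH, OrderHom.coe_mk, DFunLike.coe]
              split_ifs <;> omega)])
          (by omega) (by omega),
        aProd_inv, dProd_bot _ (show i < k - 1 by omega), inv_mul_cancel_left,
        G.cop_id (le_refl i), hy2 i (le_refl i) (by omega)]

/-- Conjunct 1: the homotopy is constant along `S_G`. -/
theorem Hn_const {n : ℕ} (x : G.WbarN n) (t : Fin (n+1) →o Fin 2) :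
    G.Hn n (G.SGn n x) t = G.SGn n x := by
  funext i
  set y' : ℕ → G.obj n := fun j => if h : j < n then G.yVal n (G.gE x) j else 1 with hy'
  have hg : ∀ j, G.xE (G.SGn n x) j = y' j := by
    intro j
    show G.xE (G.SGn n x) j = if h : j < n then G.yVal n (G.gE x) j else 1
    rw [xE]
    by_cases hj : j < n
    · rw [dif_pos hj, dif_pos hj]
      exact G.SGn_eq_yVal x ⟨j, hj⟩
    · rw [dif_neg hj, dif_neg hj]
  show G.hAux n (kOf t) (G.xE (G.SGn n x)) (n+1) (i:ℕ) = G.SGn n x i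
  rw [G.hAux_congr hg, G.SGn_eq_yVal]
  have := G.hVal_const (kOf_le t) x y' (fun j => rfl) (kOf t - 1 - (i:ℕ)) (i:ℕ) (le_refl _)
  rw [hVal] at this
  rw [this]
  show (if h : (i:ℕ) < n then G.yVal n (G.gE x) (i:ℕ) else 1) = _
  rw [dif_pos i.isLt]

end SGrp
end Paper

namespace Paper
namespace SGrp

variable (G : SGrp)

theorem fApp_mk {m n : ℕ} (θ : Fin (m+1) →o Fin (n+1)) {v : ℕ} (hv : v < m + 1) :
    (θ ⟨v, hv⟩ : ℕ) = fApp θ v := by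
  rw [fApp]
  exact congrArg (fun z : Fin (n+1) => (z:ℕ)) (congrArg θ (Fin.ext (show v = min v m by omega)))

theorem castSucc_app {m n : ℕ} (θ : Fin (m+1) →o Fin (n+1)) (i : Fin m) :
    ((θ i.castSucc : Fin (n+1)) : ℕ) = fApp θ (i : ℕ) := by
  rw [show i.castSucc = ⟨(i:ℕ), by omega⟩ from Fin.ext rfl, fApp_mk]

theorem succ_app {m n : ℕ} (θ : Fin (m+1) →o Fin (n+1)) (i : Fin m) :
    ((θ i.succ : Fin (n+1)) : ℕ) = fApp θ ((i : ℕ) + 1) := by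
  rw [show i.succ = ⟨(i:ℕ)+1, by omega⟩ from Fin.ext rfl, fApp_mk]

/-- concatenation of the blocks of `diagMap`. -/
theorem diag_blocks {m n : ℕ} (θ : Fin (m+1) →o Fin (n+1)) (x : Fin n → G.obj n) :
    ∀ v u, u ≤ v → v ≤ m →
      dProd (G.xE (G.diagMap θ x)) u v =
      dProd (fun j => G.map θ (G.xE x j)) (fApp θ u) (fApp θ v) := by
  intro v
  induction v with
  | zero =>
    intro u hu _
    have : u = 0 := by omega
    subst this
    rw [show dProd (G.xE (G.diagMap θ x)) 0 0 = 1 from rfl, dProd_empty _ (le_refl _)]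
  | succ v ih =>
    intro u hu hv
    by_cases huv : u = v + 1
    · subst huv
      rw [dProd_empty _ (le_refl _), dProd_empty _ (le_refl _)]
    · have huv' : u ≤ v := by omega
      rw [dProd_succ _ huv', ih u huv' (by omega),
        dProd_split (fun j => G.map θ (G.xE x j)) (fApp_mono θ (show u ≤ v by omega))
          (fApp_mono θ (show v ≤ v + 1 by omega))]
      congr 1
      rw [xE, dif_pos (show v < m by omega)]
      show G.diagMap θ x ⟨v, by omega⟩ = _
      rw [diagMap]
      rw [castSucc_app θ ⟨v, by omega⟩, succ_app θ ⟨v, by omega⟩]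

end SGrp
end Paper

namespace Paper
namespace SGrp

variable (G : SGrp)

theorem fApp_min {m n : ℕ} (θ : Fin (m+1) →o Fin (n+1)) (v : ℕ) :
    fApp θ (min v m) = fApp θ v := by
  rw [fApp, fApp]
  exact congrArg (fun z : Fin (n+1) => (z:ℕ)) (congrArg θ (Fin.ext (by
    show min (min v m) m = min v m
    omega)))

theorem kOf_lt_iff' {n : ℕ} (t : Fin (n+1) →o Fin 2) {q : ℕ} (hq : q ≤ n) :
    q < kOf t ↔ t ⟨q, by omega⟩ = 0 :=
  kOf_lt_iff t ⟨q, by omega⟩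

/-- case A of naturality. -/
theorem natA {m n : ℕ} (θ : Fin (m+1) →o Fin (n+1)) (x : Fin n → G.obj n)
    (t : Fin (n+1) →o Fin 2) {i : ℕ} (him : i < m)
    (hA : kOf (t.comp θ) ≤ i + 1) :
    dProd (fun j => G.map θ (G.hVal n (kOf t) (G.xE x) j)) (fApp θ i) (fApp θ (i+1)) =
    G.hVal m (kOf (t.comp θ)) (G.xE (G.diagMap θ x)) i := by
  have hkn : kOf t ≤ n + 1 := kOf_le t
  have hiff : ∀ q : ℕ, q ≤ m → (q < kOf (t.comp θ) ↔ fApp θ q < kOf t) := by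
    intro q hq
    rw [kOf_lt_iff' (t.comp θ) hq, kOf_lt_iff' t (fApp_le θ q)]
    show t (θ ⟨q, _⟩) = 0 ↔ _
    rw [show θ ⟨q, by omega⟩ = ⟨fApp θ q, by have := fApp_le θ q; omega⟩ from
      Fin.ext (fApp_mk θ (by omega))]
  have hbk : kOf t ≤ fApp θ (i+1) := by
    have := hiff (i+1) (by omega)
    omega
  rw [G.hVal_low _ hA, xE, dif_pos him]
  show _ = G.diagMap θ x ⟨i, him⟩
  rw [diagMap, castSucc_app θ ⟨i, him⟩, succ_app θ ⟨i, him⟩]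
  by_cases hak : kOf t ≤ fApp θ i + 1
  · exact dProd_congr (fun j hj hjb => by rw [G.hVal_low _ (by omega)])
  · have hav : ∀ q : Fin (m+1), (θ q : ℕ) ≤ fApp θ i ∨ kOf t ≤ (θ q : ℕ) := by
      intro q
      by_cases hqi : (q : ℕ) ≤ i
      · left
        rw [← fApp_coe]
        exact fApp_mono θ hqi
      · right
        rw [← fApp_coe]
        exact le_trans hbk (fApp_mono θ (by omega))
    have h1 : fApp θ i ≤ kOf t - 1 := by omega
    have h2 : kOf t - 1 ≤ fApp θ (i+1) := by omega
    rw [dProd_split (fun j => G.map θ (G.hVal n (kOf t) (G.xE x) j)) h1 h2,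
      dProd_split (fun j => G.map θ (G.xE x j)) h1 h2]
    congr 1
    · exact dProd_congr (fun j hj hjb => by rw [G.hVal_low _ (by omega)])
    · rw [G.ML hkn (G.xE x) θ hav (le_refl _) (by omega), G.map_dProd]

end SGrp
end Paper

namespace Paper
namespace SGrp

variable (G : SGrp)

theorem eta_point {i j N : ℕ} (w : Fin (N+1)) :
    ((ηOH i j N w : Fin (N+1)) : ℕ) =
    min (if (w:ℕ) ≤ i then (w:ℕ) else if (w:ℕ) ≤ j then i else (w:ℕ)) N := rfl

theorem comp_point {m n : ℕ} (θ : Fin (m+1) →o Fin (n+1)) (i P : ℕ) (q : Fin (m+1)) :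
    ((θ (ηOH i P m q) : Fin (n+1)) : ℕ) =
    if (q:ℕ) ≤ i then fApp θ (q:ℕ) else if (q:ℕ) ≤ P then fApp θ i else fApp θ (q:ℕ) := by
  have hq := q.isLt
  by_cases h1 : (q:ℕ) ≤ i
  · rw [show ηOH i P m q = ⟨(q:ℕ), q.isLt⟩ from Fin.ext (show
      min (if (q:ℕ) ≤ i then (q:ℕ) else if (q:ℕ) ≤ P then i else (q:ℕ)) m = (q:ℕ) by
      split_ifs <;> omega), fApp_mk, if_pos h1]
  · by_cases h2 : (q:ℕ) ≤ P
    · rw [show ηOH i P m q = ⟨min i m, by omega⟩ from Fin.ext (show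
        min (if (q:ℕ) ≤ i then (q:ℕ) else if (q:ℕ) ≤ P then i else (q:ℕ)) m = min i m by
        split_ifs <;> omega), fApp_mk, if_neg h1, if_pos h2, fApp_min]
    · rw [show ηOH i P m q = ⟨(q:ℕ), q.isLt⟩ from Fin.ext (show
        min (if (q:ℕ) ≤ i then (q:ℕ) else if (q:ℕ) ≤ P then i else (q:ℕ)) m = (q:ℕ) by
        split_ifs <;> omega), fApp_mk, if_neg h1, if_neg h2]

theorem pointS3 {m n : ℕ} (θ : Fin (m+1) →o Fin (n+1)) {i p j a : ℕ} (ha : a = fApp θ i)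
    (hip : i ≤ p) (hj1 : fApp θ p ≤ j) (hj2 : j < fApp θ (p+1)) (q : Fin (m+1)) :
    ((θ (ηOH i p m q) : Fin (n+1)) : ℕ) = ((ηOH a j n (θ (ηOH i p m q)) : Fin (n+1)) : ℕ) := by
  subst ha
  rw [eta_point, comp_point]
  have l1 := fApp_le θ (q:ℕ)
  have l2 := fApp_le θ i
  have l3 : fApp θ i ≤ fApp θ p := fApp_mono θ hip
  by_cases h1 : (q:ℕ) ≤ i
  · have := fApp_mono θ h1
    split_ifs <;> omega
  · by_cases h2 : (q:ℕ) ≤ p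
    · split_ifs <;> omega
    · have := fApp_mono θ (show p+1 ≤ (q:ℕ) by omega)
      split_ifs <;> omega

theorem pointS2 {m n : ℕ} (θ : Fin (m+1) →o Fin (n+1)) {i p j a : ℕ} (ha : a = fApp θ i)
    (hip : i ≤ p) (hpm : p + 1 ≤ m) (hj : fApp θ (p+1) ≤ j) (q : Fin (m+1)) :
    ((ηOH a j n (θ (ηOH i (p+1) m q)) : Fin (n+1)) : ℕ) =
    ((ηOH a j n (θ (ηOH i p m q)) : Fin (n+1)) : ℕ) := by
  subst ha
  rw [eta_point, eta_point, comp_point, comp_point]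
  have l1 := fApp_le θ (q:ℕ)
  have l2 := fApp_le θ i
  have l3 : fApp θ i ≤ fApp θ (p+1) := fApp_mono θ (by omega)
  by_cases h1 : (q:ℕ) ≤ i
  · split_ifs <;> omega
  · by_cases h2 : (q:ℕ) ≤ p
    · split_ifs <;> omega
    · by_cases h3 : (q:ℕ) ≤ p+1
      · have l4 : fApp θ (q:ℕ) = fApp θ (p+1) := by rw [show (q:ℕ) = p+1 by omega]
        split_ifs <;> omega
      · split_ifs <;> omega

theorem pointFin {m n : ℕ} (θ : Fin (m+1) →o Fin (n+1)) {i K a c k : ℕ} (ha : a = fApp θ i)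
    (hc : c = fApp θ K) (hiK : i ≤ K) (hck : c < k)
    (hup : ∀ v, K < v → v ≤ m → k ≤ fApp θ v) (q : Fin (m+1)) :
    ((ηOH a c n (θ q) : Fin (n+1)) : ℕ) = ((θ (ηOH i K m q) : Fin (n+1)) : ℕ) := by
  subst ha hc
  rw [eta_point, comp_point, ← fApp_coe θ q]
  have l1 := fApp_le θ (q:ℕ)
  have l2 := fApp_le θ i
  by_cases h1 : (q:ℕ) ≤ i
  · have := fApp_mono θ h1
    split_ifs <;> omega
  · by_cases h2 : (q:ℕ) ≤ K
    · have h3 := fApp_mono θ (show i ≤ (q:ℕ) by omega)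
      have h4 := fApp_mono θ h2
      split_ifs <;> omega
    · have h3 := hup (q:ℕ) (by omega) (by omega)
      have h4 := fApp_mono θ hiK
      split_ifs <;> omega

end SGrp
end Paper

namespace Paper
namespace SGrp

variable (G : SGrp)

theorem kprime_iff {m n : ℕ} (θ : Fin (m+1) →o Fin (n+1)) (t : Fin (n+1) →o Fin 2) :
    ∀ q : ℕ, q ≤ m → (q < kOf (t.comp θ) ↔ fApp θ q < kOf t) := by
  intro q hq
  rw [kOf_lt_iff' (t.comp θ) hq, kOf_lt_iff' t (fApp_le θ q)]
  show t (θ ⟨q, _⟩) = 0 ↔ _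
  rw [show θ ⟨q, by omega⟩ = ⟨fApp θ q, by have := fApp_le θ q; omega⟩ from
    Fin.ext (fApp_mk θ (by omega))]

/-- case B of naturality. -/
theorem natB {m n : ℕ} (θ : Fin (m+1) →o Fin (n+1)) (x : Fin n → G.obj n)
    (t : Fin (n+1) →o Fin 2) {i : ℕ} (him : i < m)
    (hBc : i + 1 < kOf (t.comp θ))
    (IH : ∀ p, i < p → p < kOf (t.comp θ) - 1 →
      dProd (fun j => G.map θ (G.hVal n (kOf t) (G.xE x) j)) (fApp θ p) (fApp θ (p+1)) =
      G.hVal m (kOf (t.comp θ)) (G.xE (G.diagMap θ x)) p) :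
    dProd (fun j => G.map θ (G.hVal n (kOf t) (G.xE x) j)) (fApp θ i) (fApp θ (i+1)) =
    G.hVal m (kOf (t.comp θ)) (G.xE (G.diagMap θ x)) i := by
  set k := kOf t with hkdef
  set k' := kOf (t.comp θ) with hk'def
  have hkn : k ≤ n + 1 := kOf_le t
  have hk'm : k' ≤ m + 1 := kOf_le (t.comp θ)
  have hiff : ∀ q : ℕ, q ≤ m → (q < k' ↔ fApp θ q < k) := kprime_iff θ t
  have hck : fApp θ (k'-1) < k := (hiff (k'-1) (by omega)).mp (by omega)
  have hac : fApp θ i ≤ fApp θ (k'-1) := fApp_mono θ (by omega)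
  have hup : ∀ v, k' - 1 < v → v ≤ m → k ≤ fApp θ v := by
    intro v h1 h2
    have := hiff v h2
    omega
  -- rewrite RHS by its recursion and the outer induction hypothesis
  rw [G.hVal_rec hk'm _ hBc,
    aProd_congr (g := fun p => (G.cop m i p (dProd
      (fun j => G.map θ (G.hVal n k (G.xE x) j)) (fApp θ p) (fApp θ (p+1))))⁻¹)
      (fun p hp hpk => by beta_reduce; rw [IH p (by omega) (by omega)]),
    G.diag_blocks θ x (k'-1) i (by omega) (by omega), ← G.map_dProd θ (G.xE x), aProd_inv]
  -- the WINV invariant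
  have winv : ∀ d p, i ≤ p → p ≤ k'-1 → k'-1-p ≤ d →
      dProd (fun q => G.cop m i q (dProd (fun j => G.map θ (G.hVal n k (G.xE x) j))
          (fApp θ q) (fApp θ (q+1)))) p (k'-1) =
      G.cop m i p (G.map θ (dProd (fun j => G.cop n (fApp θ i) j (G.hVal n k (G.xE x) j))
          (fApp θ p) (fApp θ (k'-1)))) := by
    intro d
    induction d with
    | zero =>
      intro p hp1 hp2 hp3
      have hpe : p = k'-1 := by omega
      subst hpe
      rw [dProd_empty _ (le_refl _), dProd_empty _ (le_refl _), G.map_one, cop, G.map_one]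
    | succ d ihd =>
      intro p hp1 hp2 hp3
      by_cases hpe : p = k'-1
      · subst hpe
        rw [dProd_empty _ (le_refl _), dProd_empty _ (le_refl _), G.map_one, cop, G.map_one]
      · have hplt : p < k'-1 := by omega
        rw [dProd_bot _ hplt, ihd (p+1) (by omega) (by omega) (by omega)]
        have hS2 : G.cop m i (p+1) (G.map θ (dProd
              (fun j => G.cop n (fApp θ i) j (G.hVal n k (G.xE x) j))
              (fApp θ (p+1)) (fApp θ (k'-1)))) =
            G.cop m i p (G.map θ (dProd
              (fun j => G.cop n (fApp θ i) j (G.hVal n k (G.xE x) j))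
              (fApp θ (p+1)) (fApp θ (k'-1)))) := by
          rw [cop, cop, G.map_comp, G.map_comp, G.map_dProd, G.map_dProd]
          refine dProd_congr (fun j hj hjc => ?_)
          beta_reduce
          rw [cop, G.map_comp, G.map_comp]
          refine G.map_ext (fun q => ?_) _
          simp only [OrderHom.comp_coe, Function.comp_apply]
          exact pointS2 θ rfl (by omega) (by omega) hj q
        have hS3 : G.cop m i p (dProd (fun j => G.map θ (G.hVal n k (G.xE x) j))
              (fApp θ p) (fApp θ (p+1))) =
            G.cop m i p (G.map θ (dProd
              (fun j => G.cop n (fApp θ i) j (G.hVal n k (G.xE x) j))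
              (fApp θ p) (fApp θ (p+1)))) := by
          rw [cop, cop, G.map_comp, G.map_dProd, G.map_dProd]
          refine dProd_congr (fun j hj hjb => ?_)
          beta_reduce
          rw [cop, G.map_comp, G.map_comp]
          refine G.map_ext (fun q => ?_) _
          simp only [OrderHom.comp_coe, Function.comp_apply]
          exact pointS3 θ rfl (by omega) hj hjb q
        rw [hS2, hS3, ← G.cop_mul, ← G.map_mul,
          ← dProd_split _ (fApp_mono θ (show p ≤ p+1 by omega))
            (fApp_mono θ (show p+1 ≤ k'-1 by omega))]
  have hwi := winv (k'-1-i) i (le_refl _) (by omega) (le_refl _)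
  rw [dProd_bot _ (show i < k'-1 by omega), G.cop_id (le_refl i), G.cop_id (le_refl i)] at hwi
  have hfin : G.map θ (dProd (fun j => G.cop n (fApp θ i) j (G.hVal n k (G.xE x) j))
        (fApp θ i) (fApp θ (k'-1))) =
      G.cop m i (k'-1) (G.map θ (dProd (G.xE x) (fApp θ i) (fApp θ (k'-1)))) := by
    by_cases hace : fApp θ i = fApp θ (k'-1)
    · rw [hace, dProd_empty _ (le_refl _), dProd_empty _ (le_refl _), G.map_one,
        cop, G.map_one]
    · have haclt : fApp θ i < fApp θ (k'-1) := by omega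
      have hddl := G.ddl (show k-1 ≤ n by omega) (fun j => G.hVal n k (G.xE x) j)
        (fun i' => G.cop n i' (k-1) (dProd (G.xE x) i' (k-1)))
        (G.hVal_rec hkn _ (show fApp θ i + 1 < k by omega))
        (by rw [G.cop_cop (by omega) (by omega) (by omega), max_eq_left (by omega)])
        haclt (by omega)
      rw [← hddl, cop, cop, G.map_comp, G.map_comp]
      rw [G.map_ext (θ := (ηOH (fApp θ i) (fApp θ (k'-1)) n).comp θ)
        (ψ := θ.comp (ηOH i (k'-1) m)) (fun q => by
          simp only [OrderHom.comp_coe, Function.comp_apply]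
          exact pointFin θ rfl rfl (by omega) hck hup q) _]
      have hav2 : ∀ q : Fin (m+1),
          ((θ.comp (ηOH i (k'-1) m)) q : ℕ) ≤ fApp θ i ∨ k ≤ ((θ.comp (ηOH i (k'-1) m)) q : ℕ) := by
        intro q
        have hcp := comp_point θ i (k'-1) q
        have hq := q.isLt
        show ((θ ((ηOH i (k'-1) m) q)) : ℕ) ≤ _ ∨ _ ≤ ((θ ((ηOH i (k'-1) m) q)) : ℕ)
        rw [hcp]
        by_cases h1 : (q:ℕ) ≤ i
        · left; rw [if_pos h1]; exact fApp_mono θ h1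
        · by_cases h2 : (q:ℕ) ≤ k'-1
          · left; rw [if_neg h1, if_pos h2]
          · right; rw [if_neg h1, if_neg h2]; exact hup (q:ℕ) (by omega) (by omega)
      have e1 := G.ML hkn (G.xE x) (θ.comp (ηOH i (k'-1) m)) hav2
        (le_refl (fApp θ i)) (show fApp θ i ≤ k-1 by omega)
      have e2 := G.ML hkn (G.xE x) (θ.comp (ηOH i (k'-1) m)) hav2
        (show fApp θ i ≤ fApp θ (k'-1) from hac) (show fApp θ (k'-1) ≤ k-1 by omega)
      rw [G.map_dProd]
      refine mul_left_cancel (a := dProd (fun l => G.map (θ.comp (ηOH i (k'-1) m))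
        (G.hVal n k (G.xE x) l)) (fApp θ (k'-1)) (k-1)) ?_
      rw [← dProd_split _ hac (show fApp θ (k'-1) ≤ k-1 by omega), e1, e2,
        ← G.map_mul, ← dProd_split _ hac (show fApp θ (k'-1) ≤ k-1 by omega)]
  rw [← hfin, ← hwi, inv_mul_cancel_left]

end SGrp
end Paper

namespace Paper
namespace SGrp

variable (G : SGrp)

/-- Conjunct 4: `H` is natural, i.e. a simplicial map. -/
theorem Hn_natural {m n : ℕ} (θ : Fin (m+1) →o Fin (n+1)) (x : Fin n → G.obj n)
    (t : Fin (n+1) →o Fin 2) :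
    G.diagMap θ (G.Hn n x t) = G.Hn m (G.diagMap θ x) (t.comp θ) := by
  have hk'm := kOf_le (t.comp θ)
  have main : ∀ d (i : ℕ), i < m → kOf (t.comp θ) - 1 - i ≤ d →
      dProd (fun j => G.map θ (G.hVal n (kOf t) (G.xE x) j)) (fApp θ i) (fApp θ (i+1)) =
      G.hVal m (kOf (t.comp θ)) (G.xE (G.diagMap θ x)) i := by
    intro d
    induction d with
    | zero =>
      intro i him hd
      exact G.natA θ x t him (by omega)
    | succ d ih =>
      intro i him hd
      by_cases hA : kOf (t.comp θ) ≤ i + 1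
      · exact G.natA θ x t him hA
      · exact G.natB θ x t him (by omega)
          (fun p hp hpk => ih p (by omega) (by omega))
  funext i
  show dProd (fun j => G.map θ (G.xE (G.Hn n x t) j))
      ((θ i.castSucc : Fin (n+1)) : ℕ) ((θ i.succ : Fin (n+1)) : ℕ) =
    G.hAux m (kOf (t.comp θ)) (G.xE (G.diagMap θ x)) (m+1) (i:ℕ)
  rw [castSucc_app, succ_app]
  rw [dProd_congr (g := fun j => G.map θ (G.hVal n (kOf t) (G.xE x) j)) (fun j hj hjb => by
    beta_reduce
    congr 1
    rw [xE, dif_pos (show j < n by have := fApp_le θ ((i:ℕ)+1); omega)]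
    rfl)]
  exact main (kOf (t.comp θ) - 1 - (i:ℕ)) (i:ℕ) i.isLt (le_refl _)

end SGrp
end Paper

open Paper Paper.SGrp in
/-- the homotopy `H` is constant along `S_G`; consequently `W̄G` is a strong
simplicial deformation retract of `Diag NG`, with strong deformation retraction `D_G`
(the coretraction `S_G` is dimensionwise injective, `S_G D_G = id`, and `H` is a simplicial
homotopy from `D_G S_G` to the identity which is constant along `S_G`). -/
theorem stmt_17 (G : SGrp) :
    (∀ (n : ℕ) (x : G.WbarN n) (t : Fin (n+1) →o Fin 2), G.Hn n (G.SGn n x) t = G.SGn n x) ∧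
    (∀ (n : ℕ) (x : G.WbarN n), G.DGn n (G.SGn n x) = x) ∧
    (∀ (n : ℕ) (x y : G.WbarN n), G.SGn n x = G.SGn n y → x = y) ∧
    (∀ {m n : ℕ} (θ : Fin (m+1) →o Fin (n+1)) (x : Fin n → G.obj n) (t : Fin (n+1) →o Fin 2),
      G.diagMap θ (G.Hn n x t) = G.Hn m (G.diagMap θ x) (t.comp θ)) ∧
    (∀ (n : ℕ) (x : Fin n → G.obj n), G.Hn n x (τOH n 0) = G.SGn n (G.DGn n x)) ∧
    (∀ (n : ℕ) (x : Fin n → G.obj n), G.Hn n x (τOH n (n+1)) = x) := by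
  refine ⟨fun n x t => G.Hn_const x t, fun n x => G.DGn_SGn x, ?_,
    fun θ x t => G.Hn_natural θ x t, fun n x => G.Hn_bot x, fun n x => G.Hn_top x⟩
  intro n x y h
  rw [← G.DGn_SGn x, h, G.DGn_SGn y]
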